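/- arXiv:1604.07268 — 2 statements merged into one kernel-verified Lean document; each statement's English description precedes it below -/
import Mathlib

section
/- Let k1 ≤ k2 ≤ k3 ≤ k4 be integers with each ki ≥ 3, at most two of them equal to 3, and k1+k2+k3+k4 ≥ 18. Then (k1-3)/k1 + (k2-3)/k2 + (k3-3)/k3 + (k4-3)/k4 < 1 (as rational numbers) if and only if (k1,k2,k3,k4) is one of (3,3,4,8), (3,3,4,9), (3,3,4,10), (3,3,4,11), (3,3,5,7). -/
/-- Classification of sorted 4-tuples of integers (each ≥ 3, at most two equal to 3,
sum ≥ 18) whose sum of (kᵢ-3)/kᵢ is less than 1. -/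
theorem stmt_0 (k1 k2 k3 k4 : ℤ)
    (h12 : k1 ≤ k2) (h23 : k2 ≤ k3) (h34 : k3 ≤ k4)
    (h1 : 3 ≤ k1) (h2 : 3 ≤ k2) (h3 : 3 ≤ k3) (h4 : 3 ≤ k4)
    (htwo : 4 ≤ k3)
    (hsum : 18 ≤ k1 + k2 + k3 + k4) :
    ((k1 : ℚ) - 3) / k1 + ((k2 : ℚ) - 3) / k2 + ((k3 : ℚ) - 3) / k3 +
        ((k4 : ℚ) - 3) / k4 < 1 ↔
      (k1, k2, k3, k4) = (3, 3, 4, 8) ∨ (k1, k2, k3, k4) = (3, 3, 4, 9) ∨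
      (k1, k2, k3, k4) = (3, 3, 4, 10) ∨ (k1, k2, k3, k4) = (3, 3, 4, 11) ∨
      (k1, k2, k3, k4) = (3, 3, 5, 7) := by
  have z1 : (0:ℤ) < k1 := by omega
  have z2 : (0:ℤ) < k2 := by omega
  have z3 : (0:ℤ) < k3 := by omega
  have z4 : (0:ℤ) < k4 := by omega
  have p1 : (0:ℚ) < (k1:ℚ) := by exact_mod_cast z1
  have p2 : (0:ℚ) < (k2:ℚ) := by exact_mod_cast z2
  have p3 : (0:ℚ) < (k3:ℚ) := by exact_mod_cast z3
  have p4 : (0:ℚ) < (k4:ℚ) := by exact_mod_cast z4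
  have key : (((k1 : ℚ) - 3) / k1 + ((k2 : ℚ) - 3) / k2 + ((k3 : ℚ) - 3) / k3 +
        ((k4 : ℚ) - 3) / k4 < 1) ↔
      k1 * k2 * k3 * k4 < k2 * k3 * k4 + k1 * k3 * k4 + k1 * k2 * k4 + k1 * k2 * k3 := by
    rw [div_add_div _ _ p1.ne' p2.ne', div_add_div _ _ (mul_pos p1 p2).ne' p3.ne',
        div_add_div _ _ (mul_pos (mul_pos p1 p2) p3).ne' p4.ne',
        div_lt_one (by positivity)]
    constructor
    · intro h
      have h' : ((k1 * k2 * k3 * k4 : ℤ) : ℚ) <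
          ((k2 * k3 * k4 + k1 * k3 * k4 + k1 * k2 * k4 + k1 * k2 * k3 : ℤ) : ℚ) := by
        push_cast
        nlinarith [h]
      exact_mod_cast h'
    · intro h
      have h' : ((k1 * k2 * k3 * k4 : ℤ) : ℚ) <
          ((k2 * k3 * k4 + k1 * k3 * k4 + k1 * k2 * k4 + k1 * k2 * k3 : ℤ) : ℚ) := by
        exact_mod_cast h
      push_cast at h'
      nlinarith [h']
  rw [key]
  constructor
  · intro h
    -- first, k1 = 3
    have e1 : k1 = 3 := by
      by_contra hne
      have h14 : (4:ℤ) ≤ k1 := by omega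
      have h24 : (4:ℤ) ≤ k2 := by omega
      have h34' : (4:ℤ) ≤ k3 := by omega
      have h44 : (4:ℤ) ≤ k4 := by omega
      have t1 : 4 * (k2 * k3 * k4) ≤ k1 * (k2 * k3 * k4) :=
        mul_le_mul_of_nonneg_right h14 (by positivity)
      have t2 : 4 * (k1 * k3 * k4) ≤ k2 * (k1 * k3 * k4) :=
        mul_le_mul_of_nonneg_right h24 (by positivity)
      have t3 : 4 * (k1 * k2 * k4) ≤ k3 * (k1 * k2 * k4) :=
        mul_le_mul_of_nonneg_right h34' (by positivity)
      have t4 : 4 * (k1 * k2 * k3) ≤ k4 * (k1 * k2 * k3) :=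
        mul_le_mul_of_nonneg_right h44 (by positivity)
      nlinarith [h, t1, t2, t3, t4]
    subst e1
    -- next, k2 ≤ 4
    have e2 : k2 ≤ 4 := by
      by_contra hne
      have h25 : (5:ℤ) ≤ k2 := by omega
      have h35 : (5:ℤ) ≤ k3 := by omega
      have h45 : (5:ℤ) ≤ k4 := by omega
      have t1 : 5 * (k3 * k4) ≤ k2 * (k3 * k4) :=
        mul_le_mul_of_nonneg_right h25 (by positivity)
      have t2 : 5 * (k2 * k4) ≤ k3 * (k2 * k4) :=
        mul_le_mul_of_nonneg_right h35 (by positivity)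
      have t3 : 5 * (k2 * k3) ≤ k4 * (k2 * k3) :=
        mul_le_mul_of_nonneg_right h45 (by positivity)
      nlinarith [h, t1, t2, t3]
    interval_cases k2
    · -- k2 = 3
      have e3 : k3 ≤ 5 := by
        by_contra hne
        have h36 : (6:ℤ) ≤ k3 := by omega
        have t1 : 6 * k4 ≤ k3 * k4 := mul_le_mul_of_nonneg_right h36 (by positivity)
        nlinarith [h, t1]
      interval_cases k3 <;> simp [Prod.mk.injEq] <;> omega
    · -- k2 = 4, contradiction
      exfalso
      have e3 : k3 = 4 := by
        by_contra hne
        have h35 : (5:ℤ) ≤ k3 := by omega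
        have t1 : 5 * k4 ≤ k3 * k4 := mul_le_mul_of_nonneg_right h35 (by positivity)
        nlinarith [h, t1]
      subst e3
      omega
  · intro h
    rcases h with h | h | h | h | h <;>
      (simp only [Prod.mk.injEq] at h; obtain ⟨rfl, rfl, rfl, rfl⟩ := h; norm_num)
end

section
/- Let k1, k2, k3, k4 be integers with each ki ≥ 3, at most two of them equal to 3, and k1+k2+k3+k4 ≥ 18. Then the sum 1/k1 + 1/k2 + 1/k3 + 1/k4 > 1 (in ℚ) holds if and only if exactly two of the ki equal 3 and the remaining two (in sorted order a ≤ b) satisfy (a,b) ∈ {(4,8),(4,9),(4,10),(4,11),(5,7)}. -/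
private theorem aux_big (a b c d : ℤ) (ha : 12 ≤ a) (hb : 4 ≤ b) (hc : 3 ≤ c) (hd : 3 ≤ d) :
    b*c*d + a*c*d + a*b*d + a*b*c ≤ a*b*c*d := by
  nlinarith [mul_nonneg (mul_nonneg (by linarith : (0:ℤ) ≤ a - 12) (by linarith : (0:ℤ) ≤ b - 4)) (by linarith : (0:ℤ) ≤ c - 3),
    mul_nonneg (mul_nonneg (by linarith : (0:ℤ) ≤ a - 12) (by linarith : (0:ℤ) ≤ b - 4)) (by linarith : (0:ℤ) ≤ d - 3),
    mul_nonneg (mul_nonneg (by linarith : (0:ℤ) ≤ a - 12) (by linarith : (0:ℤ) ≤ c - 3)) (by linarith : (0:ℤ) ≤ d - 3),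
    mul_nonneg (mul_nonneg (by linarith : (0:ℤ) ≤ b - 4) (by linarith : (0:ℤ) ≤ c - 3)) (by linarith : (0:ℤ) ≤ d - 3),
    mul_nonneg (mul_nonneg (mul_nonneg (by linarith : (0:ℤ) ≤ a - 12) (by linarith : (0:ℤ) ≤ b - 4)) (by linarith : (0:ℤ) ≤ c - 3)) (by linarith : (0:ℤ) ≤ d - 3)]

set_option maxHeartbeats 8000000 in
private theorem bounded_key : ∀ k1 ∈ Finset.Icc (3:ℤ) 11, ∀ k2 ∈ Finset.Icc (3:ℤ) 11,
    ∀ k3 ∈ Finset.Icc (3:ℤ) 11, ∀ k4 ∈ Finset.Icc (3:ℤ) 11,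
    ([k1, k2, k3, k4].count 3) ≤ 2 → 18 ≤ k1 + k2 + k3 + k4 →
    (k1*k2*k3*k4 < k2*k3*k4 + k1*k3*k4 + k1*k2*k4 + k1*k2*k3 ↔
      (({k1, k2, k3, k4} : Multiset ℤ) = {3,3,4,8} ∨
       ({k1, k2, k3, k4} : Multiset ℤ) = {3,3,4,9} ∨
       ({k1, k2, k3, k4} : Multiset ℤ) = {3,3,4,10} ∨
       ({k1, k2, k3, k4} : Multiset ℤ) = {3,3,4,11} ∨
       ({k1, k2, k3, k4} : Multiset ℤ) = {3,3,5,7})) := by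
  exact of_decide_eq_true rfl

/-- Classification (unsorted version): for integers kᵢ ≥ 3 with at most two equal to 3
and sum ≥ 18, the reciprocal sum exceeds 1 iff exactly two of them equal 3 and the other
two, in sorted order, form one of the pairs (4,8), (4,9), (4,10), (4,11), (5,7). -/
theorem stmt_1 (k1 k2 k3 k4 : ℤ)
    (h1 : 3 ≤ k1) (h2 : 3 ≤ k2) (h3 : 3 ≤ k3) (h4 : 3 ≤ k4)
    (htwo : ([k1, k2, k3, k4].count 3) ≤ 2)
    (hsum : 18 ≤ k1 + k2 + k3 + k4) :
    1 < (1 : ℚ) / k1 + 1 / k2 + 1 / k3 + 1 / k4 ↔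
      ∃ a b : ℤ, a ≤ b ∧ ({k1, k2, k3, k4} : Multiset ℤ) = {3, 3, a, b} ∧
        ((a, b) = (4, 8) ∨ (a, b) = (4, 9) ∨ (a, b) = (4, 10) ∨
         (a, b) = (4, 11) ∨ (a, b) = (5, 7)) := by
  -- Step 1: rewrite the rational inequality as an integer inequality
  have p1 : (0:ℚ) < (k1:ℚ) := by exact_mod_cast (by linarith : (0:ℤ) < k1)
  have p2 : (0:ℚ) < (k2:ℚ) := by exact_mod_cast (by linarith : (0:ℤ) < k2)
  have p3 : (0:ℚ) < (k3:ℚ) := by exact_mod_cast (by linarith : (0:ℤ) < k3)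
  have p4 : (0:ℚ) < (k4:ℚ) := by exact_mod_cast (by linarith : (0:ℤ) < k4)
  have heq : (1 : ℚ) / k1 + 1 / k2 + 1 / k3 + 1 / k4 =
      ((k2*k3*k4 + k1*k3*k4 + k1*k2*k4 + k1*k2*k3 : ℤ) : ℚ) / ((k1*k2*k3*k4 : ℤ) : ℚ) := by
    push_cast; field_simp
  have hLHS : (1 < (1 : ℚ) / k1 + 1 / k2 + 1 / k3 + 1 / k4) ↔
      k1*k2*k3*k4 < k2*k3*k4 + k1*k3*k4 + k1*k2*k4 + k1*k2*k3 := by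
    rw [heq, lt_div_iff₀ (by push_cast; positivity), one_mul, Int.cast_lt]
  -- Step 2: rewrite the RHS as a decidable disjunction
  have hRHS : (∃ a b : ℤ, a ≤ b ∧ ({k1, k2, k3, k4} : Multiset ℤ) = {3, 3, a, b} ∧
        ((a, b) = (4, 8) ∨ (a, b) = (4, 9) ∨ (a, b) = (4, 10) ∨
         (a, b) = (4, 11) ∨ (a, b) = (5, 7))) ↔
      (({k1, k2, k3, k4} : Multiset ℤ) = {3,3,4,8} ∨
       ({k1, k2, k3, k4} : Multiset ℤ) = {3,3,4,9} ∨
       ({k1, k2, k3, k4} : Multiset ℤ) = {3,3,4,10} ∨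
       ({k1, k2, k3, k4} : Multiset ℤ) = {3,3,4,11} ∨
       ({k1, k2, k3, k4} : Multiset ℤ) = {3,3,5,7}) := by
    constructor
    · rintro ⟨a, b, _, hm, (hp|hp|hp|hp|hp)⟩ <;>
        · obtain ⟨rfl, rfl⟩ := Prod.mk.injEq .. ▸ hp
          simp_all
    · rintro (h|h|h|h|h)
      exacts [⟨4, 8, by norm_num, h, by norm_num⟩, ⟨4, 9, by norm_num, h, by norm_num⟩,
        ⟨4, 10, by norm_num, h, by norm_num⟩, ⟨4, 11, by norm_num, h, by norm_num⟩,
        ⟨5, 7, by norm_num, h, by norm_num⟩]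
  rw [hLHS, hRHS]
  -- Step 3: case on whether all kᵢ ≤ 11
  by_cases hb : k1 ≤ 11 ∧ k2 ≤ 11 ∧ k3 ≤ 11 ∧ k4 ≤ 11
  · obtain ⟨b1, b2, b3, b4⟩ := hb
    exact bounded_key k1 (Finset.mem_Icc.mpr ⟨h1, b1⟩) k2 (Finset.mem_Icc.mpr ⟨h2, b2⟩)
      k3 (Finset.mem_Icc.mpr ⟨h3, b3⟩) k4 (Finset.mem_Icc.mpr ⟨h4, b4⟩) htwo hsum
  · -- some kᵢ ≥ 12: both sides are false
    push_neg at hb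
    have hcnt : (4 ≤ k2 ∨ 4 ≤ k3 ∨ 4 ≤ k4) ∧ (4 ≤ k1 ∨ 4 ≤ k3 ∨ 4 ≤ k4) ∧
        (4 ≤ k1 ∨ 4 ≤ k2 ∨ 4 ≤ k4) ∧ (4 ≤ k1 ∨ 4 ≤ k2 ∨ 4 ≤ k3) := by
      by_cases e1 : k1 = 3 <;> by_cases e2 : k2 = 3 <;> by_cases e3 : k3 = 3 <;>
        by_cases e4 : k4 = 3 <;>
        simp [e1, e2, e3, e4, List.count_cons] at htwo ⊢ <;> omega
    constructor
    · intro hlt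
      exfalso
      have hbig : 12 ≤ k1 ∨ 12 ≤ k2 ∨ 12 ≤ k3 ∨ 12 ≤ k4 := by
        by_contra hc; push_neg at hc; omega
      obtain ⟨c1, c2, c3, c4⟩ := hcnt
      rcases hbig with hB | hB | hB | hB
      · rcases c1 with h4' | h4' | h4'
        · have := aux_big k1 k2 k3 k4 hB h4' h3 h4; linarith
        · have := aux_big k1 k3 k2 k4 hB h4' h2 h4; nlinarith
        · have := aux_big k1 k4 k2 k3 hB h4' h2 h3; nlinarith
      · rcases c2 with h4' | h4' | h4'
        · have := aux_big k2 k1 k3 k4 hB h4' h3 h4; nlinarith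
        · have := aux_big k2 k3 k1 k4 hB h4' h1 h4; nlinarith
        · have := aux_big k2 k4 k1 k3 hB h4' h1 h3; nlinarith
      · rcases c3 with h4' | h4' | h4'
        · have := aux_big k3 k1 k2 k4 hB h4' h2 h4; nlinarith
        · have := aux_big k3 k2 k1 k4 hB h4' h1 h4; nlinarith
        · have := aux_big k3 k4 k1 k2 hB h4' h1 h2; nlinarith
      · rcases c4 with h4' | h4' | h4'
        · have := aux_big k4 k1 k2 k3 hB h4' h2 h3; nlinarith
        · have := aux_big k4 k2 k1 k3 hB h4' h1 h3; nlinarith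
        · have := aux_big k4 k3 k1 k2 hB h4' h1 h2; nlinarith
    · intro hD
      exfalso
      have hmem : ∀ x ∈ ({k1, k2, k3, k4} : Multiset ℤ), x ≤ 11 := by
        rcases hD with h | h | h | h | h <;> rw [h] <;> intro x hx <;> simp at hx <;> omega
      have m1 : k1 ≤ 11 := hmem k1 (by simp)
      have m2 : k2 ≤ 11 := hmem k2 (by simp)
      have m3 : k3 ≤ 11 := hmem k3 (by simp)
      have m4 : k4 ≤ 11 := hmem k4 (by simp)
      omega
end
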